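/- arXiv:2206.06594 — 2 statements merged into one kernel-verified Lean document; each statement's English description precedes it below -/
import Mathlib

section
/- Let G, R, E, V : [0, ∞) → ℝ be differentiable functions satisfying G′(t) = R(t)·(1 − V(t)), R′(t) = E(t) − R(t), E′(t) = −E(t), and V′(t) = −2·E(t)²·(1 − V(t))² for all t ≥ 0, with initial values G(0) = 0, R(0) = 0, E(0) = 1, V(0) = 1/2. Then G(t) converges, as t → ∞, to (1/2)·∫₀^∞ s / cosh(s) ds. -/
open Filter

private lemma const_of_deriv0 {f : ℝ → ℝ} (hf : ∀ t, 0 ≤ t → HasDerivAt f 0 t) :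
    ∀ t, 0 ≤ t → f t = f 0 := by
  intro t ht
  rcases eq_or_lt_of_le ht with h | h
  · rw [← h]
  · exact constant_of_has_deriv_right_zero
      (fun x hx => (hf x hx.1).continuousAt.continuousWithinAt)
      (fun x hx => (hf x hx.1).hasDerivWithinAt)
      t (Set.mem_Icc.mpr ⟨ht, le_refl t⟩)

/-- The PIVP computing Catalan's constant `(1/2)·∫₀^∞ s / cosh s ds`:
any solution of the system with the given initial values has `G(t)`
converging to Catalan's constant. -/
theorem stmt_13 (G R E V : ℝ → ℝ)
    (hG : ∀ t : ℝ, 0 ≤ t → HasDerivAt G (R t * (1 - V t)) t)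
    (hR : ∀ t : ℝ, 0 ≤ t → HasDerivAt R (E t - R t) t)
    (hE : ∀ t : ℝ, 0 ≤ t → HasDerivAt E (-(E t)) t)
    (hV : ∀ t : ℝ, 0 ≤ t → HasDerivAt V (-2 * E t ^ 2 * (1 - V t) ^ 2) t)
    (hG0 : G 0 = 0) (hR0 : R 0 = 0) (hE0 : E 0 = 1) (hV0 : V 0 = 1 / 2) :
    Tendsto G atTop
      (nhds ((1 / 2) * ∫ s in Set.Ioi (0 : ℝ), s / Real.cosh s)) := by
  -- Step 1: E t = exp (-t) for t ≥ 0
  have hEeq : ∀ t : ℝ, 0 ≤ t → E t = Real.exp (-t) := by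
    have key : ∀ t, 0 ≤ t → E t * Real.exp t = E 0 * Real.exp 0 := by
      apply const_of_deriv0
      intro t ht
      have := (hE t ht).mul (Real.hasDerivAt_exp t)
      refine this.congr_deriv ?_
      ring
    intro t ht
    have h := key t ht
    rw [hE0, one_mul, Real.exp_zero] at h
    have hexp : Real.exp t ≠ 0 := (Real.exp_pos t).ne'
    rw [Real.exp_neg]
    field_simp at h ⊢
    linarith [h]
  -- Step 2: R t = t * exp (-t) for t ≥ 0
  have hReq : ∀ t : ℝ, 0 ≤ t → R t = t * Real.exp (-t) := by
    have key : ∀ t, 0 ≤ t → R t * Real.exp t - t = R 0 * Real.exp 0 - 0 := by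
      apply const_of_deriv0
      intro t ht
      have h1 := ((hR t ht).mul (Real.hasDerivAt_exp t)).sub (hasDerivAt_id t)
      refine h1.congr_deriv ?_
      have : E t = Real.exp (-t) := hEeq t ht
      rw [this, Real.exp_neg]
      field_simp
      ring
    intro t ht
    have h := key t ht
    rw [hR0, zero_mul, sub_zero, sub_eq_zero] at h
    rw [Real.exp_neg]
    have hexp : Real.exp t ≠ 0 := (Real.exp_pos t).ne'
    field_simp
    linarith [h]
  -- Step 3: V is antitone on [0,∞), hence V t ≤ 1/2, so 1 - V t ≥ 1/2 > 0
  have hVanti : AntitoneOn V (Set.Ici (0 : ℝ)) := by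
    apply antitoneOn_of_deriv_nonpos (convex_Ici 0)
    · intro x hx; exact (hV x hx).continuousAt.continuousWithinAt
    · intro x hx
      rw [interior_Ici] at hx
      exact ((hV x hx.le).differentiableAt).differentiableWithinAt
    · intro x hx
      rw [interior_Ici] at hx
      rw [(hV x hx.le).deriv]
      nlinarith [sq_nonneg (E x), sq_nonneg (1 - V x)]
  have hVle : ∀ t : ℝ, 0 ≤ t → 1 - V t ≥ 1/2 := by
    intro t ht
    have := hVanti (Set.self_mem_Ici) ht ht
    rw [hV0] at this
    linarith
  have hVne : ∀ t : ℝ, 0 ≤ t → (1 - V t) ≠ 0 := fun t ht => by linarith [hVle t ht]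
  -- Step 4: 1 - V t = (1 + exp (-(2*t)))⁻¹
  have hWeq : ∀ t : ℝ, 0 ≤ t → 1 - V t = (1 + Real.exp (-(2*t)))⁻¹ := by
    have key : ∀ t, 0 ≤ t →
        (1 - V t)⁻¹ - (1 + Real.exp (-(2*t))) = (1 - V 0)⁻¹ - (1 + Real.exp (-(2*0))) := by
      apply const_of_deriv0
      intro t ht
      have h1 : HasDerivAt (fun s => 1 - V s) (-(-2 * E t ^ 2 * (1 - V t) ^ 2)) t := by
        exact ((hasDerivAt_const t (1:ℝ)).sub (hV t ht)).congr_deriv (by ring)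
      have h2 := h1.inv (hVne t ht)
      have h3 : HasDerivAt (fun s => Real.exp (-(2*s))) (Real.exp (-(2*t)) * (-2)) t := by
        apply HasDerivAt.exp
        exact (((hasDerivAt_id t).const_mul (2:ℝ)).neg).congr_deriv (by norm_num)
      have h4 := h2.sub ((hasDerivAt_const t (1:ℝ)).add h3)
      refine h4.congr_deriv ?_
      have hE' : E t = Real.exp (-t) := hEeq t ht
      have hW : (1 - V t) ≠ 0 := hVne t ht
      field_simp
      rw [hE']
      rw [show (-(2*t)) = (-t) + (-t) by ring, Real.exp_add]
      ring
    intro t ht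
    have h := key t ht
    rw [hV0] at h
    norm_num at h
    have hpos : (0:ℝ) < 1 + Real.exp (-(2*t)) := by positivity
    have : (1 - V t)⁻¹ = 1 + Real.exp (-(2*t)) := by linarith
    rw [← this, inv_inv]
  -- Continuity and integrability of s / cosh s
  have hcosh_pos : ∀ s : ℝ, 0 < Real.cosh s := Real.cosh_pos
  have hcont : Continuous (fun s : ℝ => s / Real.cosh s) :=
    continuous_id.div Real.continuous_cosh (fun s => (hcosh_pos s).ne')
  have hint : MeasureTheory.IntegrableOn (fun s : ℝ => s / Real.cosh s) (Set.Ioi 0) := by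
    have hg : MeasureTheory.IntegrableOn
        (fun x : ℝ => Real.exp (-x) * x ^ ((2:ℝ) - 1)) (Set.Ioi 0) :=
      Real.GammaIntegral_convergent (by norm_num)
    apply MeasureTheory.Integrable.mono' (hg.const_mul 2)
      (hcont.aestronglyMeasurable.restrict)
    filter_upwards [MeasureTheory.ae_restrict_mem measurableSet_Ioi] with x hx
    have hx0 : (0:ℝ) < x := hx
    have h1 : Real.exp x / 2 ≤ Real.cosh x := by
      rw [Real.cosh_eq]
      have := (Real.exp_pos (-x)).le
      linarith
    have h2 : x / Real.cosh x ≤ x / (Real.exp x / 2) := by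
      apply div_le_div_of_nonneg_left hx0.le (by positivity) h1
    rw [Real.norm_eq_abs, abs_of_nonneg (by positivity)]
    calc x / Real.cosh x ≤ x / (Real.exp x / 2) := h2
      _ = 2 * (Real.exp (-x) * x ^ ((2:ℝ)-1)) := by
          rw [Real.exp_neg, show ((2:ℝ)-1) = 1 by norm_num, Real.rpow_one]
          field_simp
  -- Step 5: G t = (1/2) * ∫ s in 0..t, s / cosh s
  have hPhi : ∀ t : ℝ, HasDerivAt (fun u => ∫ s in (0:ℝ)..u, s / Real.cosh s)
      (t / Real.cosh t) t := by
    intro t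
    apply intervalIntegral.integral_hasDerivAt_right
      (hcont.intervalIntegrable 0 t)
      (hcont.stronglyMeasurableAtFilter _ _)
      hcont.continuousAt
  have hGeq : ∀ t : ℝ, 0 ≤ t →
      G t = (1/2) * ∫ s in (0:ℝ)..t, s / Real.cosh s := by
    have key : ∀ t, 0 ≤ t →
        G t - (1/2) * ∫ s in (0:ℝ)..t, s / Real.cosh s
          = G 0 - (1/2) * ∫ s in (0:ℝ)..(0:ℝ), s / Real.cosh s := by
      apply const_of_deriv0
      intro t ht
      have h1 := (hG t ht).sub ((hPhi t).const_mul (1/2 : ℝ))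
      refine h1.congr_deriv ?_
      rw [hReq t ht, hWeq t ht]
      rw [Real.cosh_eq, Real.exp_neg]
      have he : Real.exp t ≠ 0 := (Real.exp_pos t).ne'
      have h2 : (0:ℝ) < 1 + Real.exp (-(2*t)) := by positivity
      rw [show (-(2*t)) = (-t) + (-t) by ring, Real.exp_add, Real.exp_neg]
      field_simp
      ring
    intro t ht
    have h := key t ht
    rw [hG0, intervalIntegral.integral_same] at h
    linarith
  -- Conclusion
  have htend := MeasureTheory.intervalIntegral_tendsto_integral_Ioi (0:ℝ) hint tendsto_id
  have := htend.const_mul (1/2 : ℝ)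
  apply Tendsto.congr' _ this
  filter_upwards [eventually_ge_atTop (0:ℝ)] with t ht
  exact (hGeq t ht).symm
end

section
/- Define E(t) = e^{−t}, R(t) = t·e^{−t}, V(t) = e^{−2t} / (1 + e^{−2t}), and G(t) = ∫₀ᵗ s·e^{−s} / (1 + e^{−2s}) ds for t ≥ 0. Then these functions satisfy G′(t) = R(t)·(1 − V(t)), R′(t) = E(t) − R(t), E′(t) = −E(t), and V′(t) = −2·E(t)²·(1 − V(t))² for all t ≥ 0, together with the initial values G(0) = 0, R(0) = 0, E(0) = 1, V(0) = 1/2; moreover G(t) → (1/2)·∫₀^∞ s / cosh(s) ds as t → ∞. -/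
open Filter

lemma aux_cont : Continuous (fun s : ℝ => s * Real.exp (-s) / (1 + Real.exp (-2 * s))) := by
  refine Continuous.div (by continuity) (by continuity) ?_
  intro s
  positivity

lemma aux_integrable :
    MeasureTheory.IntegrableOn (fun s : ℝ => s * Real.exp (-s) / (1 + Real.exp (-2 * s)))
      (Set.Ioi (0 : ℝ)) := by
  have h2 := Real.GammaIntegral_convergent (s := 2) (by norm_num)
  refine MeasureTheory.Integrable.mono h2 aux_cont.aestronglyMeasurable.restrict ?_
  filter_upwards [MeasureTheory.ae_restrict_mem measurableSet_Ioi] with x hx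
  have hx0 : (0 : ℝ) < x := hx
  have h1 : (1 : ℝ) ≤ 1 + Real.exp (-2 * x) := by linarith [Real.exp_pos (-2 * x)]
  have habs : |x * Real.exp (-x) / (1 + Real.exp (-2 * x))| =
      x * Real.exp (-x) / (1 + Real.exp (-2 * x)) := by
    rw [abs_of_nonneg]; positivity
  rw [Real.norm_eq_abs, Real.norm_eq_abs, habs]
  have : x * Real.exp (-x) / (1 + Real.exp (-2 * x)) ≤ x * Real.exp (-x) := by
    apply div_le_self (by positivity) h1
  calc x * Real.exp (-x) / (1 + Real.exp (-2 * x)) ≤ x * Real.exp (-x) := this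
    _ = Real.exp (-x) * x ^ ((2:ℝ) - 1) := by
        rw [show (2:ℝ) - 1 = 1 by norm_num, Real.rpow_one]; ring
    _ ≤ |Real.exp (-x) * x ^ ((2:ℝ) - 1)| := le_abs_self _

/-- Explicit-solution verification of the PIVP computing Catalan's constant
`(1/2)·∫₀^∞ s / cosh s ds`. -/
theorem stmt_14 :
    let E : ℝ → ℝ := fun t => Real.exp (-t)
    let R : ℝ → ℝ := fun t => t * Real.exp (-t)
    let V : ℝ → ℝ := fun t => Real.exp (-2 * t) / (1 + Real.exp (-2 * t))
    let G : ℝ → ℝ := fun t => ∫ s in (0 : ℝ)..t,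
      s * Real.exp (-s) / (1 + Real.exp (-2 * s))
    (∀ t : ℝ, 0 ≤ t → HasDerivAt G (R t * (1 - V t)) t) ∧
    (∀ t : ℝ, 0 ≤ t → HasDerivAt R (E t - R t) t) ∧
    (∀ t : ℝ, 0 ≤ t → HasDerivAt E (-(E t)) t) ∧
    (∀ t : ℝ, 0 ≤ t → HasDerivAt V (-2 * E t ^ 2 * (1 - V t) ^ 2) t) ∧
    G 0 = 0 ∧ R 0 = 0 ∧ E 0 = 1 ∧ V 0 = 1 / 2 ∧
    Tendsto G atTop
      (nhds ((1 / 2) * ∫ s in Set.Ioi (0 : ℝ), s / Real.cosh s)) := by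
  intro E R V G
  have hEexp : ∀ t : ℝ, HasDerivAt E (-(E t)) t := by
    intro t
    have := (Real.hasDerivAt_exp (-t)).comp t (hasDerivAt_neg t)
    simpa [E, mul_comm, Function.comp_def] using this
  have hpos : ∀ t : ℝ, (0:ℝ) < 1 + Real.exp (-2 * t) := fun t => by positivity
  refine ⟨?_, ?_, fun t _ => hEexp t, ?_, ?_, ?_, ?_, ?_, ?_⟩
  · intro t _
    have hd := intervalIntegral.integral_hasDerivAt_right
      (f := fun s : ℝ => s * Real.exp (-s) / (1 + Real.exp (-2 * s))) (a := (0:ℝ)) (b := t)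
      (aux_cont.intervalIntegrable 0 t)
      (aux_cont.stronglyMeasurableAtFilter _ _)
      aux_cont.continuousAt
    have heq : t * Real.exp (-t) / (1 + Real.exp (-2 * t)) = R t * (1 - V t) := by
      have h := (hpos t).ne'
      simp only [R, V]
      field_simp
      ring
    have hd' : HasDerivAt G (t * Real.exp (-t) / (1 + Real.exp (-2 * t))) t := hd
    rw [heq] at hd'
    exact hd'
  · intro t _
    have h := (hasDerivAt_id t).mul (hEexp t)
    have h2 : E t - R t = 1 * E t + t * -(E t) := by simp [E, R]; ring
    exact h2 ▸ h
  · intro t _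
    have ha : HasDerivAt (fun x : ℝ => Real.exp (-2 * x)) (-2 * Real.exp (-2 * t)) t := by
      have h1 : HasDerivAt (fun x : ℝ => (-2:ℝ) * x) (-2) t := by
        simpa using (hasDerivAt_id t).const_mul (-2)
      have := (Real.hasDerivAt_exp (-2 * t)).comp t h1
      simpa [Function.comp_def, mul_comm] using this
    have hb : HasDerivAt (fun x : ℝ => 1 + Real.exp (-2 * x)) (-2 * Real.exp (-2 * t)) t := by
      exact ((hasDerivAt_const t (1:ℝ)).add ha).congr_deriv (by ring)
    have hd := ha.div hb (hpos t).ne'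
    have heq : (-2 * Real.exp (-2 * t) * (1 + Real.exp (-2 * t)) -
        Real.exp (-2 * t) * (-2 * Real.exp (-2 * t))) / (1 + Real.exp (-2 * t)) ^ 2 =
        -2 * E t ^ 2 * (1 - V t) ^ 2 := by
      have h := (hpos t).ne'
      have hE2 : E t ^ 2 = Real.exp (-2 * t) := by
        simp only [E, ← Real.exp_add, ← Real.exp_nat_mul, sq]
        ring_nf
      simp only [V, hE2]
      field_simp
      ring
    rw [heq] at hd
    exact hd
  · simp [G]
  · simp [R]
  · simp [E]
  · norm_num [V]
  · have hcongr : ∀ s : ℝ, s * Real.exp (-s) / (1 + Real.exp (-2 * s)) =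
        (1 / 2) * (s / Real.cosh s) := by
      intro s
      have h1 : (0:ℝ) < 1 + Real.exp (-2 * s) := hpos s
      have h2 : (0:ℝ) < Real.exp s + Real.exp (-s) := by positivity
      have hes : Real.exp (-s) * Real.exp s = 1 := by
        rw [← Real.exp_add]; simp
      have e2 : Real.exp (-2 * s) = Real.exp (-s) * Real.exp (-s) := by
        rw [← Real.exp_add]; ring_nf
      have hrhs : (1:ℝ) / 2 * (s / Real.cosh s) = s / (Real.exp s + Real.exp (-s)) := by
        rw [Real.cosh_eq]; field_simp
      rw [hrhs, e2, div_eq_div_iff (by positivity) h2.ne']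
      linear_combination s * hes
    have := MeasureTheory.intervalIntegral_tendsto_integral_Ioi (0:ℝ)
      (f := fun s : ℝ => s * Real.exp (-s) / (1 + Real.exp (-2 * s)))
      (μ := MeasureTheory.volume) aux_integrable tendsto_id
    have hint : (∫ s in Set.Ioi (0:ℝ), s * Real.exp (-s) / (1 + Real.exp (-2 * s))) =
        (1 / 2) * ∫ s in Set.Ioi (0:ℝ), s / Real.cosh s := by
      rw [← MeasureTheory.integral_const_mul]
      exact MeasureTheory.integral_congr_ae (Filter.Eventually.of_forall fun s => hcongr s)
    rw [hint] at this
    exact this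
end
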